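/- Let q be odd and consider the matrix group T(a,b,c) of all 4×4 matrices of the form [[r - bs, -as, 0, 0], [cs, r, 0, 0], [0, 0, r - bs, as], [0, 0, -cs, r]] with r, s ∈ F_q and r² - brs + acs² ∈ F_q×. If b² - 4ac is a nonzero square in F_q, then T(a,b,c) is isomorphic as a group to F_q× × F_q×; if b² - 4ac is a nonsquare, then T(a,b,c) is isomorphic to F_{q²}×. -/

import Mathlib

open scoped Classical
open Matrix Polynomial

namespace Stmt13Aux

set_option linter.unusedSectionVars false
set_option maxHeartbeats 1000000

variable {F : Type*} [Field F]

noncomputable def pol (a b c : F) : F[X] := X ^ 2 + C b * X + C (a * c)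

theorem pol_monic (a b c : F) : (pol a b c).Monic := by
  unfold pol; monicity!

theorem pol_natDegree (a b c : F) : (pol a b c).natDegree = 2 := by
  unfold pol; compute_degree!

theorem pol_degree (a b c : F) : (pol a b c).degree = 2 := by
  unfold pol; compute_degree!

noncomputable def Mat (a b c r s : F) : Matrix (Fin 4) (Fin 4) F :=
  !![r - b * s, -(a * s), 0, 0;
     c * s, r, 0, 0;
     0, 0, r - b * s, a * s;
     0, 0, -(c * s), r]

noncomputable def M0 (a b c : F) : Matrix (Fin 4) (Fin 4) F :=
  !![-b, -a, 0, 0; c, 0, 0, 0; 0, 0, -b, a; 0, 0, -c, 0]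

noncomputable def Phi2 (a b c : F) : F[X] →+* Matrix (Fin 4) (Fin 4) F :=
  Polynomial.eval₂RingHom' (algebraMap F (Matrix (Fin 4) (Fin 4) F)) (M0 a b c)
    (fun r => Algebra.commutes r (M0 a b c))

theorem Phi2_apply (a b c : F) (g : F[X]) :
    Phi2 a b c g = g.eval₂ (algebraMap F (Matrix (Fin 4) (Fin 4) F)) (M0 a b c) := rfl

theorem M0_eval (a b c : F) : Phi2 a b c (pol a b c) = 0 := by
  rw [Phi2_apply]
  simp only [pol, eval₂_add, eval₂_mul, eval₂_pow, eval₂_X, eval₂_C]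
  ext i j
  fin_cases i <;> fin_cases j <;>
    simp [M0, pow_two, Matrix.mul_apply, Fin.sum_univ_four,
      Matrix.algebraMap_matrix_apply, Matrix.vecHead, Matrix.vecTail] <;> ring

noncomputable def Phi (a b c : F) : AdjoinRoot (pol a b c) →+* Matrix (Fin 4) (Fin 4) F :=
  Ideal.Quotient.lift _ (Phi2 a b c) (by
    intro g hg
    rw [Ideal.mem_span_singleton] at hg
    obtain ⟨h, rfl⟩ := hg
    rw [_root_.map_mul, M0_eval, zero_mul])

theorem Phi_mk_gen (a b c : F) (g : F[X]) :
    Phi a b c (AdjoinRoot.mk (pol a b c) g) = Phi2 a b c g := rfl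

theorem Phi_mk (a b c r s : F) :
    Phi a b c (AdjoinRoot.mk (pol a b c) (C r + C s * X)) = Mat a b c r s := by
  rw [Phi_mk_gen, Phi2_apply]
  simp only [eval₂_add, eval₂_mul, eval₂_X, eval₂_C]
  ext i j
  fin_cases i <;> fin_cases j <;>
    simp [M0, Mat, Matrix.mul_apply, Fin.sum_univ_four,
      Matrix.algebraMap_matrix_apply, Matrix.vecHead, Matrix.vecTail] <;> ring

theorem repr' (a b c : F) (z : AdjoinRoot (pol a b c)) :
    ∃ r s : F, z = AdjoinRoot.mk (pol a b c) (C r + C s * X) := by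
  obtain ⟨g, rfl⟩ := AdjoinRoot.mk_surjective z
  refine ⟨(g %ₘ pol a b c).coeff 0, (g %ₘ pol a b c).coeff 1, ?_⟩
  have h1 : AdjoinRoot.mk (pol a b c) g = AdjoinRoot.mk (pol a b c) (g %ₘ pol a b c) := by
    rw [AdjoinRoot.mk_eq_mk]
    refine ⟨g /ₘ pol a b c, ?_⟩
    have := Polynomial.modByMonic_eq_sub_mul_div g (pol a b c)
    linear_combination -this
  have hdeg : (g %ₘ pol a b c).degree ≤ 1 := by
    have := Polynomial.degree_modByMonic_lt g (pol_monic a b c)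
    rw [pol_degree] at this
    exact Order.lt_succ_iff.mp (by exact_mod_cast this)
  have h2 := Polynomial.eq_X_add_C_of_degree_le_one hdeg
  rw [h1]
  conv_lhs => rw [h2]
  congr 1
  ring

theorem Phi_inj (a b c : F) (hd : b ^ 2 - 4 * a * c ≠ 0) :
    Function.Injective (Phi a b c) := by
  rw [injective_iff_map_eq_zero]
  intro z hz
  obtain ⟨r, s, rfl⟩ := repr' a b c z
  rw [Phi_mk] at hz
  have h00 : r - b * s = 0 := by
    have := congrFun (congrFun hz 0) 0; simpa [Mat] using this
  have h11 : r = 0 := by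
    have := congrFun (congrFun hz 1) 1; simpa [Mat] using this
  have h01 : a * s = 0 := by
    have := congrFun (congrFun hz 0) 1
    simp [Mat] at this
    rcases this with h | h
    · rw [h, zero_mul]
    · rw [h, mul_zero]
  have h10 : c * s = 0 := by
    have := congrFun (congrFun hz 1) 0
    simp [Mat] at this
    rcases this with h | h
    · rw [h, zero_mul]
    · rw [h, mul_zero]
  have hs : s = 0 := by
    by_contra hs
    have ha : a = 0 := (mul_eq_zero.mp h01).resolve_right hs
    have hc : c = 0 := (mul_eq_zero.mp h10).resolve_right hs
    have hb : b = 0 := by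
      have hbs : b * s = 0 := by
        rw [h11, zero_sub, neg_eq_zero] at h00
        exact h00
      exact (mul_eq_zero.mp hbs).resolve_right hs
    apply hd; rw [ha, hb, hc]; ring
  subst hs
  rw [h11]
  simp

theorem key_mul (a b c r s : F) :
    AdjoinRoot.mk (pol a b c) (C r + C s * X) *
      AdjoinRoot.mk (pol a b c) (C (r - b * s) + C (-s) * X) =
      AdjoinRoot.mk (pol a b c) (C (r ^ 2 - b * r * s + a * c * s ^ 2)) := by
  rw [← _root_.map_mul, AdjoinRoot.mk_eq_mk]
  refine ⟨-C (s ^ 2), ?_⟩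
  simp only [pol, C_mul, C_add, C_sub, C_neg, C_pow]
  ring

theorem isUnit_mk (a b c r s : F) (hD : r ^ 2 - b * r * s + a * c * s ^ 2 ≠ 0) :
    IsUnit (AdjoinRoot.mk (pol a b c) (C r + C s * X)) := by
  apply IsUnit.of_mul_eq_one
    (AdjoinRoot.mk (pol a b c)
      (C ((r ^ 2 - b * r * s + a * c * s ^ 2)⁻¹ * (r - b * s)) +
        C ((r ^ 2 - b * r * s + a * c * s ^ 2)⁻¹ * (-s)) * X))
  have h2 : (AdjoinRoot.mk (pol a b c))
      (C ((r ^ 2 - b * r * s + a * c * s ^ 2)⁻¹ * (r - b * s)) +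
        C ((r ^ 2 - b * r * s + a * c * s ^ 2)⁻¹ * (-s)) * X) =
      AdjoinRoot.mk (pol a b c) (C (r ^ 2 - b * r * s + a * c * s ^ 2)⁻¹) *
        AdjoinRoot.mk (pol a b c) (C (r - b * s) + C (-s) * X) := by
    rw [← _root_.map_mul]; congr 1
    simp only [C_mul]; ring
  rw [h2, ← mul_assoc, mul_comm (AdjoinRoot.mk _ _), mul_assoc, key_mul, ← _root_.map_mul,
    ← C_mul, mul_comm, mul_inv_cancel₀ hD]
  simp

theorem det_Mat (a b c r s : F) :
    (Mat a b c r s).det = (r ^ 2 - b * r * s + a * c * s ^ 2) ^ 2 := by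
  simp [Mat, Matrix.det_succ_row_zero, Fin.sum_univ_succ, Fin.succAbove]
  ring

noncomputable def pb (a b c : F) : PowerBasis F (AdjoinRoot (pol a b c)) :=
  AdjoinRoot.powerBasis' (pol_monic a b c)

theorem finite_adjoinRoot (a b c : F) [Finite F] : Finite (AdjoinRoot (pol a b c)) :=
  Finite.of_equiv _ ((pb a b c).basis.repr.toEquiv.trans (Finsupp.equivFunOnFinite)).symm

theorem card_adjoinRoot [Fintype F] (a b c : F) [Fintype (AdjoinRoot (pol a b c))] :
    Fintype.card (AdjoinRoot (pol a b c)) = Fintype.card F ^ 2 := by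
  have h := Module.card_fintype (pb a b c).basis
  rwa [Fintype.card_fin, show (pb a b c).dim = 2 from pol_natDegree a b c] at h

theorem pol_irred (a b c : F) (hns : ¬ IsSquare (b ^ 2 - 4 * a * c)) :
    Irreducible (pol a b c) := by
  by_contra h
  rw [(pol_monic a b c).not_irreducible_iff_exists_add_mul_eq_coeff (pol_natDegree a b c)] at h
  obtain ⟨c₁, c₂, h0, h1⟩ := h
  have hc0 : (pol a b c).coeff 0 = a * c := by simp [pol]
  have hc1 : (pol a b c).coeff 1 = b := by simp [pol, coeff_X_pow]
  rw [hc0] at h0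
  rw [hc1] at h1
  exact hns ⟨c₁ - c₂, by linear_combination (b + c₁ + c₂) * h1 - 4 * h0⟩

theorem ringEquivProd [Fintype F] (h2 : (2 : F) ≠ 0) (a b c : F)
    (hd : b ^ 2 - 4 * a * c ≠ 0) (d : F) (hd2 : b ^ 2 - 4 * a * c = d * d) :
    Nonempty (AdjoinRoot (pol a b c) ≃+* F × F) := by
  have hev : (pol a b c).eval₂ ((RingHom.id F).prod (RingHom.id F))
      (((d - b) / 2, (-d - b) / 2) : F × F) = 0 := by
    simp only [pol, eval₂_add, eval₂_mul, eval₂_pow, eval₂_X, eval₂_C]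
    refine Prod.ext ?_ ?_ <;> simp [RingHom.prod_apply]
    · field_simp
      linear_combination -hd2
    · field_simp
      linear_combination -hd2
  set ψ := AdjoinRoot.lift ((RingHom.id F).prod (RingHom.id F))
      (((d - b) / 2, (-d - b) / 2) : F × F) hev with hψ
  have hdne : d ≠ 0 := fun h => hd (by rw [hd2, h, mul_zero])
  have hinj : Function.Injective ψ := by
    rw [injective_iff_map_eq_zero]
    intro z hz
    obtain ⟨r, s, rfl⟩ := repr' a b c z
    rw [hψ, AdjoinRoot.lift_mk] at hz
    simp only [eval₂_add, eval₂_mul, eval₂_X, eval₂_C] at hz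
    have e1 := congrArg Prod.fst hz
    have e2 := congrArg Prod.snd hz
    simp [RingHom.prod_apply] at e1 e2
    have hs : s = 0 := by
      have hsd : s * d = 0 := by
        linear_combination e1 - e2 - (s * d) * (inv_mul_cancel₀ h2)
      exact (mul_eq_zero.mp hsd).resolve_right hdne
    subst hs
    have hr : r = 0 := by linear_combination e1
    rw [hr]
    simp
  haveI : Fintype (AdjoinRoot (pol a b c)) :=
    @Fintype.ofFinite _ (finite_adjoinRoot a b c)
  have hcard : Fintype.card (AdjoinRoot (pol a b c)) = Fintype.card (F × F) := by
    rw [card_adjoinRoot, Fintype.card_prod, sq]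
  exact ⟨RingEquiv.ofBijective ψ ((Fintype.bijective_iff_injective_and_card ψ).mpr ⟨hinj, hcard⟩)⟩


end Stmt13Aux

open Stmt13Aux in
theorem stmt13 {F : Type*} [Field F] [Fintype F] (hq : Odd (Fintype.card F))
    (a b c : F) (hd : b ^ 2 - 4 * a * c ≠ 0) :
    ∃ T : Subgroup (GL (Fin 4) F),
      (∀ g : GL (Fin 4) F, g ∈ T ↔ ∃ r s : F,
          r ^ 2 - b * r * s + a * c * s ^ 2 ≠ 0 ∧
          (g : Matrix (Fin 4) (Fin 4) F) =
            !![r - b * s, -(a * s), 0, 0;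
               c * s, r, 0, 0;
               0, 0, r - b * s, a * s;
               0, 0, -(c * s), r]) ∧
      (IsSquare (b ^ 2 - 4 * a * c) → Nonempty (T ≃* Fˣ × Fˣ)) ∧
      (¬ IsSquare (b ^ 2 - 4 * a * c) →
        ∀ (K : Type) [Field K] [Fintype K],
          Fintype.card K = Fintype.card F ^ 2 → Nonempty (T ≃* Kˣ)) := by
  have hchar : ringChar F ≠ 2 := by
    intro h
    have := FiniteField.even_card_iff_char_two.mp h
    rw [Nat.odd_iff.mp hq] at this
    exact one_ne_zero this
  have h2 : (2 : F) ≠ 0 := Ring.two_ne_zero hchar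
  have hUinj : Function.Injective (Units.map (Phi a b c).toMonoidHom) := by
    intro u v huv
    exact Units.ext (Phi_inj a b c hd (congrArg Units.val huv))
  refine ⟨(Units.map (Phi a b c).toMonoidHom).range, ?_, ?_, ?_⟩
  · intro g
    constructor
    · rintro ⟨u, rfl⟩
      obtain ⟨r, s, hu⟩ := repr' a b c u.val
      have hcoe : ((Units.map (Phi a b c).toMonoidHom u :
          (Matrix (Fin 4) (Fin 4) F)ˣ) : Matrix (Fin 4) (Fin 4) F) = Mat a b c r s := by
        rw [Units.coe_map]
        show Phi a b c u.val = _
        rw [hu, Phi_mk]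
      refine ⟨r, s, ?_, hcoe.trans rfl⟩
      have hdet : IsUnit (Mat a b c r s).det := by
        rw [← hcoe]
        exact (Matrix.isUnit_iff_isUnit_det _).mp (Units.isUnit _)
      rw [det_Mat] at hdet
      intro h0
      rw [h0] at hdet
      simp at hdet
    · rintro ⟨r, s, hD, hg⟩
      refine ⟨(isUnit_mk a b c r s hD).unit, ?_⟩
      apply Units.ext
      rw [Units.coe_map]
      show Phi a b c ((isUnit_mk a b c r s hD).unit : AdjoinRoot (pol a b c)) = _
      rw [IsUnit.unit_spec, Phi_mk, hg]
      rfl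
  · rintro ⟨d, hd2⟩
    obtain ⟨e⟩ := ringEquivProd h2 a b c hd d hd2
    exact ⟨(MonoidHom.ofInjective hUinj).symm.trans
      ((Units.mapEquiv e.toMulEquiv).trans MulEquiv.prodUnits)⟩
  · intro hns K _ _ hK
    haveI : Fact (Irreducible (pol a b c)) := ⟨pol_irred a b c hns⟩
    haveI : Fintype (AdjoinRoot (pol a b c)) := @Fintype.ofFinite _ (finite_adjoinRoot a b c)
    have hcard : Fintype.card (AdjoinRoot (pol a b c)) = Fintype.card K := by
      rw [card_adjoinRoot, hK]
    have e : AdjoinRoot (pol a b c) ≃+* K := FiniteField.ringEquivOfCardEq hcard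
    exact ⟨(MonoidHom.ofInjective hUinj).symm.trans (Units.mapEquiv e.toMulEquiv)⟩
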